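/- Partition the twenty 3-subsets of {1,...,6} into ten pairs {v, v^c} of complementary sets. Any partition of J(6,3) into two parts, each of which is a union of five of these complementary pairs, is a perfect 2-coloring with quotient matrix [[4,5],[5,4]]. -/

import Mathlib

/-- The Johnson graph `J(n,k)`: vertices are the `k`-element subsets of an
`n`-element set, two vertices adjacent when their intersection has `k-1` elements. -/
def johnsonGraph (n k : ℕ) : SimpleGraph {s : Finset (Fin n) // s.card = k} where
  Adj x y := (x.1 ∩ y.1).card = k - 1 ∧ x ≠ y
  symm := by
    constructor
    intro x y h
    exact ⟨by rw [Finset.inter_comm]; exact h.1, h.2.symm⟩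
  loopless := by
    constructor
    intro x h
    exact h.2 rfl

instance (n k : ℕ) : DecidableRel (johnsonGraph n k).Adj :=
  fun x y => inferInstanceAs (Decidable ((x.1 ∩ y.1).card = k - 1 ∧ x ≠ y))

/-- A perfect 2-coloring of a finite graph `G` with quotient matrix
`[[p11, p12], [p21, p22]]`: a partition of the vertices into nonempty parts
`X1`, `X2` such that every vertex of `Xi` has exactly `p i j` neighbors in `Xj`. -/
def IsPerfect2Coloring {V : Type*} [Fintype V] [DecidableEq V]
    (G : SimpleGraph V) [DecidableRel G.Adj] (X1 X2 : Finset V)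
    (p11 p12 p21 p22 : ℕ) : Prop :=
  X1 ∪ X2 = Finset.univ ∧ Disjoint X1 X2 ∧ X1.Nonempty ∧ X2.Nonempty ∧
  (∀ v ∈ X1, (G.neighborFinset v ∩ X1).card = p11 ∧
             (G.neighborFinset v ∩ X2).card = p12) ∧
  (∀ v ∈ X2, (G.neighborFinset v ∩ X1).card = p21 ∧
             (G.neighborFinset v ∩ X2).card = p22)

namespace AntipodalAux

abbrev V6 := {s : Finset (Fin 6) // s.card = 3}

set_option maxRecDepth 10000 in
set_option maxHeartbeats 1000000 in
lemma base : ∀ s t : Finset (Fin 6), ¬(s.card = 3 ∧ t.card = 3 ∧ t ≠ s ∧ t ≠ sᶜ ∧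
    ¬((s ∩ t).card = 2 ↔ ¬ (s ∩ tᶜ).card = 2)) := by decide

def c (v : V6) : V6 := ⟨v.1ᶜ, by rw [Finset.card_compl, v.2]; rfl⟩

lemma c_c (v : V6) : c (c v) = v := Subtype.ext (by simp [c])

lemma c_inj : Function.Injective c := fun a b h => by rw [← c_c a, h, c_c]

lemma c_ne (v : V6) : c v ≠ v := by
  intro h
  have h1 : v.1ᶜ = v.1 := congrArg Subtype.val h
  have h2 : v.1 = ∅ := by
    have := Finset.inter_compl v.1
    rwa [h1, Finset.inter_self] at this
  simpa [h2] using v.2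

lemma flip (v w : V6) (h1 : w ≠ v) (h2 : w ≠ c v) :
    (johnsonGraph 6 3).Adj v w ↔ ¬ (johnsonGraph 6 3).Adj v (c w) := by
  have key : (v.1 ∩ w.1).card = 2 ↔ ¬ (v.1 ∩ w.1ᶜ).card = 2 := by
    by_contra hk
    exact base v.1 w.1 ⟨v.2, w.2, fun h => h1 (Subtype.ext h),
      fun h => h2 (Subtype.ext h), hk⟩
  have hvw : v ≠ w := fun h => h1 h.symm
  have hvcw : v ≠ c w := fun h => h2 (by rw [h, c_c])
  show ((v.1 ∩ w.1).card = 2 ∧ v ≠ w) ↔ ¬((v.1 ∩ (c w).1).card = 2 ∧ v ≠ c w)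
  constructor
  · rintro ⟨ha, -⟩ ⟨hb, -⟩
    exact key.mp ha hb
  · intro hn
    refine ⟨key.mpr fun h => hn ⟨h, hvcw⟩, hvw⟩

lemma count_notMem (v : V6) (S : Finset V6) (hS : ∀ w ∈ S, c w ∈ S)
    (hv : v ∉ S) (hv' : c v ∉ S) :
    S.card = 2 * ((johnsonGraph 6 3).neighborFinset v ∩ S).card := by
  classical
  set N := (johnsonGraph 6 3).neighborFinset v with hN
  have hmem : ∀ w ∈ S, (w ∈ N ↔ c w ∉ N) := by
    intro w hw
    have h1 : w ≠ v := fun h => hv (h ▸ hw)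
    have h2 : w ≠ c v := fun h => hv' (h ▸ hw)
    simpa [hN, SimpleGraph.mem_neighborFinset] using flip v w h1 h2
  set T := N ∩ S with hT
  have himg : S \ T = T.image c := by
    ext w
    simp only [Finset.mem_sdiff, Finset.mem_image, Finset.mem_inter, hT]
    constructor
    · rintro ⟨hwS, hw⟩
      have hwN : w ∉ N := fun h => hw ⟨h, hwS⟩
      have hcN : c w ∈ N := not_not.mp (fun hc => hwN ((hmem w hwS).mpr hc))
      exact ⟨c w, ⟨hcN, hS w hwS⟩, c_c w⟩
    · rintro ⟨u, ⟨huN, huS⟩, rfl⟩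
      refine ⟨hS u huS, ?_⟩
      rintro ⟨hcN, -⟩
      exact (hmem u huS).mp huN hcN
  have hTS : T ⊆ S := Finset.inter_subset_right
  have h1 : (S \ T).card = T.card := by
    rw [himg, Finset.card_image_of_injective _ c_inj]
  have h2 : (S \ T).card + T.card = S.card :=
    Finset.card_sdiff_add_card_eq_card hTS
  omega

lemma cv_not_nbr (v : V6) : c v ∉ (johnsonGraph 6 3).neighborFinset v := by
  rw [SimpleGraph.mem_neighborFinset]
  rintro ⟨h, -⟩
  have : (v.1 ∩ v.1ᶜ).card = 2 := h
  rw [Finset.inter_compl] at this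
  simp at this

lemma count_mem (v : V6) (S : Finset V6) (hS : ∀ w ∈ S, c w ∈ S)
    (hv : v ∈ S) :
    S.card = 2 * ((johnsonGraph 6 3).neighborFinset v ∩ S).card + 2 := by
  classical
  set N := (johnsonGraph 6 3).neighborFinset v with hN
  set S' := S \ {v, c v} with hS'
  have hvN : v ∉ N := SimpleGraph.notMem_neighborFinset_self _ _
  have hcvN : c v ∉ N := cv_not_nbr v
  have hNS : N ∩ S = N ∩ S' := by
    ext w
    simp only [Finset.mem_inter, hS', Finset.mem_sdiff, Finset.mem_insert,
      Finset.mem_singleton]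
    constructor
    · rintro ⟨hwN, hwS⟩
      refine ⟨hwN, hwS, ?_⟩
      rintro (rfl | rfl)
      · exact hvN hwN
      · exact hcvN hwN
    · rintro ⟨hwN, hwS, -⟩
      exact ⟨hwN, hwS⟩
  have hclosed : ∀ w ∈ S', c w ∈ S' := by
    intro w hw
    rw [hS', Finset.mem_sdiff] at hw ⊢
    obtain ⟨hwS, hw2⟩ := hw
    refine ⟨hS w hwS, ?_⟩
    simp only [Finset.mem_insert, Finset.mem_singleton] at hw2 ⊢
    push_neg at hw2 ⊢
    exact ⟨fun h => hw2.2 (by rw [← c_c w, h]), fun h => hw2.1 (c_inj h)⟩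
  have hvS' : v ∉ S' := by simp [hS']
  have hcvS' : c v ∉ S' := by simp [hS']
  have hcount := count_notMem v S' hclosed hvS' hcvS'
  rw [← hN] at hcount
  have hsub : {v, c v} ⊆ S := by
    intro x hx
    simp only [Finset.mem_insert, Finset.mem_singleton] at hx
    rcases hx with rfl | rfl
    · exact hv
    · exact hS v hv
  have hpair : ({v, c v} : Finset V6).card = 2 := by
    rw [Finset.card_insert_of_notMem (by simp [Ne.symm (c_ne v)]),
      Finset.card_singleton]
  have hcards : S'.card + 2 = S.card := by
    rw [hS', ← hpair]
    exact Finset.card_sdiff_add_card_eq_card hsub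
  rw [hNS]
  omega

set_option maxRecDepth 10000 in
lemma card_V : Fintype.card V6 = 20 := by decide

end AntipodalAux

open AntipodalAux

/-- Any partition of `J(6,3)` into two parts, each of which is a union of five
pairs of complementary 3-subsets, is a perfect 2-coloring with quotient
matrix `[[4,5],[5,4]]`. -/
theorem antipodal_pairs_perfect_coloring
    (X1 : Finset {s : Finset (Fin 6) // s.card = 3})
    (hcard : X1.card = 10)
    (hcompl : ∀ v ∈ X1, ∀ w : {s : Finset (Fin 6) // s.card = 3},
      w.1 = v.1ᶜ → w ∈ X1) :
    IsPerfect2Coloring (johnsonGraph 6 3) X1 X1ᶜ 4 5 5 4 := by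
  classical
  have hcc1 : ∀ v ∈ X1, c v ∈ X1 := fun v hv => hcompl v hv (c v) rfl
  have hcc2 : ∀ v ∈ X1ᶜ, c v ∈ X1ᶜ := by
    intro v hv
    rw [Finset.mem_compl] at hv ⊢
    intro h
    exact hv (c_c v ▸ hcc1 _ h)
  have hcard2 : X1ᶜ.card = 10 := by
    rw [Finset.card_compl, hcard, card_V]
  refine ⟨Finset.union_compl _, disjoint_compl_right,
    Finset.card_pos.mp (by omega), Finset.card_pos.mp (by omega), ?_, ?_⟩
  · intro v hv
    have h1 := count_mem v X1 hcc1 hv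
    have h2 := count_notMem v X1ᶜ hcc2 (by simpa using hv)
      (by rw [Finset.mem_compl, not_not]; exact hcc1 v hv)
    constructor <;> omega
  · intro v hv
    have h1 := count_notMem v X1 hcc1 (Finset.mem_compl.mp hv)
      (Finset.mem_compl.mp (hcc2 v hv))
    have h2 := count_mem v X1ᶜ hcc2 hv
    constructor <;> omega
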